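/- Let g be CN-war-stable with equal strengths and γ ≥ 1, let i have maximum degree d_i and ij ∈ g. If C is a clique of g − ij with i ∉ C and |C| > γ·(1 + |N_i(g−ij)\C|), then C ⊆ N_i(g), |C| = ⌈γ·d_i/(1+γ)⌉, and |C| > γ·d_i/(1+γ). Moreover, for any clique C of g with i ∉ C, |C ∩ N_i(g)| ≤ ⌈γ·d_i/(1+γ)⌉. -/
import Mathlib


open Finset

/-- The allies (neighbors) of `i` in network `g`, as a `Finset`. -/
noncomputable def nbrs {V : Type*} [Fintype V] (g : SimpleGraph V) (i : V) : Finset V :=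
  @Finset.filter _ (fun j => g.Adj i j) (Classical.decPred _) Finset.univ

/-- The network `g` with the alliance `jk` added. -/
def addE {V : Type*} (g : SimpleGraph V) (j k : V) : SimpleGraph V :=
  g ⊔ SimpleGraph.fromEdgeSet {s(j, k)}

/-- The network `g` with the alliance `jk` deleted. -/
def delE {V : Type*} (g : SimpleGraph V) (j k : V) : SimpleGraph V :=
  g.deleteEdges {s(j, k)}

/-- CN-vulnerability with uniform strengths `M C = |C|` and constant `γ`:
country `i` is CN-vulnerable at `g` if some clique `C` of `g` not containing `i`
satisfies `|C| > γ · (1 + |N_i(g) \ C|)`. -/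
def CNVul {V : Type*} [Fintype V] [DecidableEq V] (g : SimpleGraph V) (γ : ℝ) (i : V) :
    Prop :=
  ∃ C : Finset V, g.IsClique ↑C ∧ i ∉ C ∧
    γ * (1 + ((nbrs g i) \ C).card) < (C.card : ℝ)

/-- CN-war-stability: (S1) no country CN-vulnerable; (S2) no country CN-vulnerable after
adding any non-link; (S3) both endpoints of any link become CN-vulnerable upon its
deletion. -/
def CNWarStable {V : Type*} [Fintype V] [DecidableEq V] (g : SimpleGraph V) (γ : ℝ) :
    Prop :=
  (∀ v : V, ¬ CNVul g γ v) ∧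
  (∀ j k : V, j ≠ k → ¬ g.Adj j k → ∀ v : V, ¬ CNVul (addE g j k) γ v) ∧
  (∀ j k : V, g.Adj j k → CNVul (delE g j k) γ j ∧ CNVul (delE g j k) γ k)


lemma mem_nbrs {V : Type*} [Fintype V] (g : SimpleGraph V) (i v : V) :
    v ∈ nbrs g i ↔ g.Adj i v := by
  simp [nbrs]

lemma notVul_le {V : Type*} [Fintype V] [DecidableEq V] {g : SimpleGraph V} {γ : ℝ}
    {v : V} (h : ¬ CNVul g γ v) {C : Finset V} (hcl : g.IsClique ↑C) (hv : v ∉ C) :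
    (C.card : ℝ) ≤ γ * (1 + ((nbrs g v) \ C).card) := by
  by_contra hlt
  exact h ⟨C, hcl, hv, not_le.mp hlt⟩

lemma addE_adj {V : Type*} (g : SimpleGraph V) (i k a b : V) :
    (addE g i k).Adj a b ↔ g.Adj a b ∨ (a ≠ b ∧ ((a = i ∧ b = k) ∨ (a = k ∧ b = i))) := by
  simp only [addE, SimpleGraph.sup_adj, SimpleGraph.fromEdgeSet_adj, Set.mem_singleton_iff,
    Sym2.eq_iff]
  tauto

lemma le_addE {V : Type*} (g : SimpleGraph V) (i k : V) : g ≤ addE g i k := le_sup_left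

lemma delE_le {V : Type*} (g : SimpleGraph V) (i j : V) : delE g i j ≤ g :=
  SimpleGraph.deleteEdges_le _

lemma nbrs_delE_self {V : Type*} [Fintype V] [DecidableEq V] (g : SimpleGraph V) (i j : V) :
    nbrs (delE g i j) i = (nbrs g i).erase j := by
  ext w
  simp only [mem_nbrs, delE, SimpleGraph.deleteEdges_adj, Set.mem_singleton_iff,
    Sym2.congr_right, Finset.mem_erase, mem_nbrs]
  tauto

lemma nbrs_addE_other {V : Type*} [Fintype V] [DecidableEq V] (g : SimpleGraph V)
    (i k u : V) (hui : u ≠ i) (huk : u ≠ k) : nbrs (addE g i k) u = nbrs g u := by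
  ext w
  simp only [mem_nbrs, addE_adj]
  constructor
  · rintro (h | ⟨-, (⟨h1, -⟩ | ⟨h1, -⟩)⟩)
    · exact h
    · exact absurd h1 hui
    · exact absurd h1 huk
  · exact Or.inl

set_option maxHeartbeats 1000000 in
/-- Claim 2: if `g` is CN-war-stable, `i` has maximum degree `d_i`, `ij ∈ g`,
and `C` is a clique of `g - ij` witnessing `i`'s CN-vulnerability there, then
`C ⊆ N_i(g)`, `|C| = ⌈γ d_i/(1+γ)⌉`, and `|C| > γ d_i/(1+γ)`; moreover any clique `C'`
of `g` with `i ∉ C'` has `|C' ∩ N_i(g)| ≤ ⌈γ d_i/(1+γ)⌉`. -/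
theorem claim_two {n : ℕ} (hn : 3 ≤ n) (γ : ℝ) (hγ : 1 ≤ γ)
    (g : SimpleGraph (Fin n)) (hstable : CNWarStable g γ)
    (i j : Fin n) (hmax : ∀ v : Fin n, (nbrs g v).card ≤ (nbrs g i).card)
    (hij : g.Adj i j)
    (C : Finset (Fin n)) (hclique : (delE g i j).IsClique ↑C) (hiC : i ∉ C)
    (hwin : γ * (1 + ((nbrs (delE g i j) i) \ C).card) < (C.card : ℝ)) :
    C ⊆ nbrs g i ∧
    (C.card : ℤ) = ⌈γ * ((nbrs g i).card : ℝ) / (1 + γ)⌉ ∧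
    γ * ((nbrs g i).card : ℝ) / (1 + γ) < (C.card : ℝ) ∧
    ∀ C' : Finset (Fin n), g.IsClique ↑C' → i ∉ C' →
      ((C' ∩ nbrs g i).card : ℤ) ≤ ⌈γ * ((nbrs g i).card : ℝ) / (1 + γ)⌉ := by
  obtain ⟨hS1, hS2, hS3⟩ := hstable
  have hγ0 : (0:ℝ) ≤ γ := le_trans zero_le_one hγ
  have hiNi : i ∉ nbrs g i := by simp [mem_nbrs]
  have hjNi : j ∈ nbrs g i := (mem_nbrs g i j).mpr hij
  have hCg : g.IsClique ↑C := hclique.mono (delE_le g i j)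
  have hwin' : γ * (1 + (((nbrs g i).erase j \ C).card : ℝ)) < C.card := by
    rwa [nbrs_delE_self g i j] at hwin
  have hS1C := notVul_le (hS1 i) hCg hiC
  -- key inequality : γ * (d - a) < c
  have hkey : γ * (((nbrs g i).card : ℝ) - ((C ∩ nbrs g i).card : ℝ)) < C.card := by
    have h1 : ((nbrs g i).erase j).card + 1 = (nbrs g i).card :=
      Finset.card_erase_add_one hjNi
    have h2 : ((nbrs g i).erase j \ C).card + ((nbrs g i).erase j ∩ C).card
        = ((nbrs g i).erase j).card := Finset.card_sdiff_add_card_inter _ _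
    have h3 : ((nbrs g i).erase j ∩ C).card ≤ (C ∩ nbrs g i).card := by
      apply Finset.card_le_card
      intro x hx
      simp only [mem_inter, mem_erase] at hx ⊢
      exact ⟨hx.2, hx.1.2⟩
    have h4 : ((nbrs g i).card : ℝ) - ((C ∩ nbrs g i).card : ℝ)
        ≤ 1 + (((nbrs g i).erase j \ C).card : ℝ) := by
      have h5 : (nbrs g i).card ≤ 1 + ((nbrs g i).erase j \ C).card + (C ∩ nbrs g i).card := by
        omega
      have h6 : ((nbrs g i).card : ℝ)
          ≤ 1 + (((nbrs g i).erase j \ C).card : ℝ) + ((C ∩ nbrs g i).card : ℝ) := by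
        exact_mod_cast h5
      linarith
    calc γ * (((nbrs g i).card : ℝ) - ((C ∩ nbrs g i).card : ℝ))
        ≤ γ * (1 + (((nbrs g i).erase j \ C).card : ℝ)) :=
          mul_le_mul_of_nonneg_left h4 hγ0
      _ < C.card := hwin'
  -- Part 1 : C ⊆ N_i(g)
  have hsub : C ⊆ nbrs g i := by
    by_contra hns
    obtain ⟨k, hkC, hkNi⟩ := Finset.not_subset.mp hns
    have hik : i ≠ k := fun h => hiC (h ▸ hkC)
    have hnadj : ¬ g.Adj i k := fun h => hkNi ((mem_nbrs g i k).mpr h)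
    have hS2' := hS2 i k hik hnadj
    have hcard : (C \ nbrs g i).card + (C ∩ nbrs g i).card = C.card :=
      Finset.card_sdiff_add_card_inter _ _
    have htpos : 0 < (C \ nbrs g i).card :=
      Finset.card_pos.mpr ⟨k, Finset.mem_sdiff.mpr ⟨hkC, hkNi⟩⟩
    by_cases h1 : (C \ nbrs g i).card = 1
    · -- exactly one member of C outside N_i ; it is k
      have hCk : C \ nbrs g i = {k} := by
        obtain ⟨x, hx⟩ := Finset.card_eq_one.mp h1
        have : k ∈ ({x} : Finset (Fin n)) := hx ▸ Finset.mem_sdiff.mpr ⟨hkC, hkNi⟩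
        rw [Finset.mem_singleton] at this
        rw [hx, this]
      have honly : ∀ w ∈ C, w ∉ nbrs g i → w = k := by
        intro w hw hwn
        have : w ∈ C \ nbrs g i := Finset.mem_sdiff.mpr ⟨hw, hwn⟩
        rw [hCk, Finset.mem_singleton] at this
        exact this
      -- a ≥ 1
      have ha1 : 0 < (C ∩ nbrs g i).card := by
        rcases Nat.eq_zero_or_pos (C ∩ nbrs g i).card with h0 | h0
        · exfalso
          have hc1 : C.card = 1 := by omega
          have hd1 : 1 ≤ (nbrs g i).card := Finset.card_pos.mpr ⟨j, hjNi⟩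
          have hd1' : (1:ℝ) ≤ ((nbrs g i).card : ℝ) := by exact_mod_cast hd1
          have h0' : ((C ∩ nbrs g i).card : ℝ) = 0 := by exact_mod_cast h0
          have hc1' : (C.card : ℝ) = 1 := by exact_mod_cast hc1
          nlinarith [hkey]
        · exact h0
      obtain ⟨u, huA⟩ := Finset.card_pos.mp ha1
      have huC : u ∈ C := (Finset.mem_inter.mp huA).1
      have huNi : u ∈ nbrs g i := (Finset.mem_inter.mp huA).2
      have hui : u ≠ i := fun h => hiNi (h ▸ huNi)
      have huk : u ≠ k := fun h => hkNi (h ▸ huNi)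
      have hiD : i ∉ C.erase u := fun h => hiC (Finset.mem_of_mem_erase h)
      have hDclique : (addE g i k).IsClique ↑(insert i (C.erase u)) := by
        rw [SimpleGraph.isClique_iff]
        intro x hx y hy hxy
        simp only [coe_insert, Set.mem_insert_iff, mem_coe, Finset.mem_erase] at hx hy
        have hcore : ∀ w, w ∈ C → (addE g i k).Adj i w := by
          intro w hwC
          by_cases hwNi : w ∈ nbrs g i
          · exact le_addE g i k ((mem_nbrs g i w).mp hwNi)
          · have hwk : w = k := honly w hwC hwNi
            subst hwk
            rw [addE_adj]
            exact Or.inr ⟨hik, Or.inl ⟨rfl, rfl⟩⟩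
        rcases hx with hx | ⟨hxu, hxC⟩
        · rcases hy with hy | ⟨hyu, hyC⟩
          · exact absurd (hx.trans hy.symm) hxy
          · rw [hx]; exact hcore y hyC
        · rcases hy with hy | ⟨hyu, hyC⟩
          · rw [hy]; exact (hcore x hxC).symm
          · exact le_addE g i k (hCg hxC hyC hxy)
      have huD : u ∉ insert i (C.erase u) := by
        simp [hui]
      have hvul := notVul_le (hS2' u) hDclique huD
      rw [nbrs_addE_other g i k u hui huk] at hvul
      have hDsub : insert i (C.erase u) ⊆ nbrs g u := by
        intro w hw
        rw [mem_nbrs]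
        rcases Finset.mem_insert.mp hw with hwi | hw'
        · rw [hwi]; exact ((mem_nbrs g i u).mp huNi).symm
        · obtain ⟨hwu, hwC⟩ := Finset.mem_erase.mp hw'
          exact hCg huC hwC (Ne.symm hwu)
      have hcpos : 0 < C.card := Finset.card_pos.mpr ⟨u, huC⟩
      have hDcard : (insert i (C.erase u)).card = C.card := by
        rw [Finset.card_insert_of_notMem hiD, Finset.card_erase_of_mem huC]
        omega
      have hDle : C.card ≤ (nbrs g u).card := by
        have := Finset.card_le_card hDsub
        rwa [hDcard] at this
      have hsd : ((nbrs g u) \ insert i (C.erase u)).card = (nbrs g u).card - C.card := by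
        rw [Finset.card_sdiff_of_subset hDsub, hDcard]
      have hcast : (((nbrs g u) \ insert i (C.erase u)).card : ℝ)
          = ((nbrs g u).card : ℝ) - (C.card : ℝ) := by
        rw [hsd, Nat.cast_sub hDle]
      rw [hDcard, hcast] at hvul
      have hdu : ((nbrs g u).card : ℝ) ≤ ((nbrs g i).card : ℝ) := by exact_mod_cast hmax u
      have hac : ((C ∩ nbrs g i).card : ℝ) = (C.card : ℝ) - 1 := by
        have : (C ∩ nbrs g i).card + 1 = C.card := by omega
        have := congrArg (Nat.cast : ℕ → ℝ) this
        push_cast at this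
        linarith
      rw [hac] at hkey
      have hmono : γ * (1 + (((nbrs g u).card : ℝ) - C.card))
          ≤ γ * (((nbrs g i).card : ℝ) - ((C.card : ℝ) - 1)) :=
        mul_le_mul_of_nonneg_left (by linarith) hγ0
      linarith
    · -- t ≥ 2
      have ht2 : 1 < (C \ nbrs g i).card := by omega
      obtain ⟨v, hvCN, hvk⟩ := Finset.exists_mem_ne ht2 k
      have hvC : v ∈ C := (Finset.mem_sdiff.mp hvCN).1
      have hvNi : v ∉ nbrs g i := (Finset.mem_sdiff.mp hvCN).2
      have hvi : v ≠ i := fun h => hiC (h ▸ hvC)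
      have hkA : k ∉ C ∩ nbrs g i := fun h => hkNi (Finset.mem_inter.mp h).2
      have hiA : i ∉ C ∩ nbrs g i := fun h => hiC (Finset.mem_inter.mp h).1
      have hik' : i ∉ insert k (C ∩ nbrs g i) := by simp [hik, hiA]
      have hDclique : (addE g i k).IsClique ↑(insert i (insert k (C ∩ nbrs g i))) := by
        rw [SimpleGraph.isClique_iff]
        intro x hx y hy hxy
        simp only [coe_insert, Set.mem_insert_iff, mem_coe, Finset.mem_insert] at hx hy
        have hcore : ∀ w, (w = k ∨ w ∈ C ∩ nbrs g i) → (addE g i k).Adj i w := by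
          intro w hw
          rcases hw with h | h
          · rw [h, addE_adj]
            exact Or.inr ⟨hik, Or.inl ⟨rfl, rfl⟩⟩
          · exact le_addE g i k ((mem_nbrs g i w).mp (Finset.mem_inter.mp h).2)
        have hmemC : ∀ w, (w = k ∨ w ∈ C ∩ nbrs g i) → w ∈ C := by
          intro w hw
          rcases hw with h | h
          · rw [h]; exact hkC
          · exact (Finset.mem_inter.mp h).1
        rcases hx with hx | hx'
        · rcases hy with hy | hy'
          · exact absurd (hx.trans hy.symm) hxy
          · rw [hx]; exact hcore y hy'
        · rcases hy with hy | hy'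
          · rw [hy]; exact (hcore x hx').symm
          · exact le_addE g i k (hCg (hmemC x hx') (hmemC y hy') hxy)
      have hvD : v ∉ insert i (insert k (C ∩ nbrs g i)) := by
        simp only [Finset.mem_insert, Finset.mem_inter, not_or]
        exact ⟨hvi, hvk, fun h => hvNi h.2⟩
      have hvul := notVul_le (hS2' v) hDclique hvD
      rw [nbrs_addE_other g i k v hvi hvk] at hvul
      have hEsub : insert k (C ∩ nbrs g i) ⊆ nbrs g v := by
        intro w hw
        rw [mem_nbrs]
        rcases Finset.mem_insert.mp hw with rfl | hwA
        · exact hCg hvC hkC hvk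
        · obtain ⟨hwC, hwNi⟩ := Finset.mem_inter.mp hwA
          have : v ≠ w := fun h => hvNi (h ▸ hwNi)
          exact hCg hvC hwC this
      have hiNv : i ∉ nbrs g v := by
        intro h
        exact hvNi ((mem_nbrs g i v).mpr ((mem_nbrs g v i).mp h).symm)
      have hsdiff_eq : nbrs g v \ insert i (insert k (C ∩ nbrs g i))
          = nbrs g v \ insert k (C ∩ nbrs g i) := by
        ext x
        simp only [Finset.mem_sdiff, Finset.mem_insert, not_or]
        constructor
        · rintro ⟨h1, -, h2, h3⟩
          exact ⟨h1, h2, h3⟩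
        · rintro ⟨h1, h2, h3⟩
          exact ⟨h1, fun h => hiNv (h ▸ h1), h2, h3⟩
      have hEcard : (insert k (C ∩ nbrs g i)).card = (C ∩ nbrs g i).card + 1 :=
        Finset.card_insert_of_notMem hkA
      have hDcard : (insert i (insert k (C ∩ nbrs g i))).card = (C ∩ nbrs g i).card + 2 := by
        rw [Finset.card_insert_of_notMem hik', hEcard]
      have hEle : (C ∩ nbrs g i).card + 1 ≤ (nbrs g v).card := by
        have := Finset.card_le_card hEsub
        rwa [hEcard] at this
      have hsd : ((nbrs g v) \ insert k (C ∩ nbrs g i)).card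
          = (nbrs g v).card - ((C ∩ nbrs g i).card + 1) := by
        rw [Finset.card_sdiff_of_subset hEsub, hEcard]
      have hcast : (((nbrs g v) \ insert k (C ∩ nbrs g i)).card : ℝ)
          = ((nbrs g v).card : ℝ) - (((C ∩ nbrs g i).card : ℝ) + 1) := by
        rw [hsd, Nat.cast_sub hEle]
        push_cast
        ring
      rw [hsdiff_eq, hcast, hDcard] at hvul
      push_cast at hvul
      have hdv : ((nbrs g v).card : ℝ) ≤ ((nbrs g i).card : ℝ) := by exact_mod_cast hmax v
      -- hvul : a + 2 ≤ γ * (1 + (degv - (a+1)))  ≤ γ*(d-a) < c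
      have hmono : γ * (1 + (((nbrs g v).card : ℝ) - (((C ∩ nbrs g i).card : ℝ) + 1)))
          ≤ γ * (((nbrs g i).card : ℝ) - ((C ∩ nbrs g i).card : ℝ)) :=
        mul_le_mul_of_nonneg_left (by linarith) hγ0
      have ht3 : ((C ∩ nbrs g i).card : ℝ) + 2 < (C.card : ℝ) := by linarith
      have ht3' : (C ∩ nbrs g i).card + 3 ≤ C.card := by exact_mod_cast ht3
      -- member degree bound via S1 at v with clique C.erase v
      have hCvcl : g.IsClique ↑(C.erase v) :=
        hCg.subset (Finset.coe_subset.mpr (Finset.erase_subset _ _))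
      have hS1v := notVul_le (hS1 v) hCvcl (Finset.notMem_erase v C)
      have hCvsub : C.erase v ⊆ nbrs g v := by
        intro w hw
        obtain ⟨hwv, hwC⟩ := Finset.mem_erase.mp hw
        rw [mem_nbrs]
        exact hCg hvC hwC (Ne.symm hwv)
      have hcpos : 0 < C.card := Finset.card_pos.mpr ⟨v, hvC⟩
      have hCvcard : (C.erase v).card = C.card - 1 := Finset.card_erase_of_mem hvC
      have hCvle : C.card - 1 ≤ (nbrs g v).card := by
        have := Finset.card_le_card hCvsub
        rwa [hCvcard] at this
      have hsd2 : ((nbrs g v) \ C.erase v).card = (nbrs g v).card - (C.card - 1) := by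
        rw [Finset.card_sdiff_of_subset hCvsub, hCvcard]
      have hcast2 : (((nbrs g v) \ C.erase v).card : ℝ)
          = ((nbrs g v).card : ℝ) - ((C.card : ℝ) - 1) := by
        rw [hsd2, Nat.cast_sub hCvle, Nat.cast_sub (by omega : 1 ≤ C.card)]
        push_cast
        ring
      have hcast3 : ((C.erase v).card : ℝ) = (C.card : ℝ) - 1 := by
        rw [hCvcard, Nat.cast_sub (by omega : 1 ≤ C.card)]
        norm_num
      rw [hcast2, hcast3] at hS1v
      -- final contradiction
      have h10 : ((C ∩ nbrs g i).card : ℝ) + 3 ≤ (C.card : ℝ) := by exact_mod_cast ht3'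
      nlinarith [hkey, hS1v, hdv, hγ, mul_le_mul_of_nonneg_left
        (show (1 + (((nbrs g v).card : ℝ) - ((C.card : ℝ) - 1)) + 1)
          ≤ (((nbrs g i).card : ℝ) - ((C ∩ nbrs g i).card : ℝ)) by linarith) hγ0]
  -- j ∉ C
  have hjC : j ∉ C := by
    intro hjC
    have heq : (nbrs g i).erase j \ C = nbrs g i \ C := by
      ext x
      simp only [Finset.mem_sdiff, Finset.mem_erase]
      constructor
      · rintro ⟨⟨-, h1⟩, h2⟩
        exact ⟨h1, h2⟩
      · rintro ⟨h1, h2⟩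
        exact ⟨⟨fun h => h2 (h ▸ hjC), h1⟩, h2⟩
    rw [heq] at hwin'
    linarith
  -- counting identities
  have hCsub' : C ⊆ (nbrs g i).erase j := fun x hx =>
    Finset.mem_erase.mpr ⟨fun h => hjC (h ▸ hx), hsub hx⟩
  have hle : C.card ≤ ((nbrs g i).erase j).card := Finset.card_le_card hCsub'
  have herase : ((nbrs g i).erase j).card + 1 = (nbrs g i).card :=
    Finset.card_erase_add_one hjNi
  have hq : (((nbrs g i).erase j \ C).card : ℝ) + C.card + 1 = (nbrs g i).card := by
    have h8 : ((nbrs g i).erase j \ C).card + C.card + 1 = (nbrs g i).card := by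
      have := Finset.card_sdiff_of_subset hCsub'
      omega
    exact_mod_cast h8
  have hwin2 : γ * (((nbrs g i).card : ℝ) - C.card) < C.card := by
    have h7 : (1 : ℝ) + (((nbrs g i).erase j \ C).card : ℝ)
        = ((nbrs g i).card : ℝ) - C.card := by linarith
    rwa [h7] at hwin'
  have hNiC : ((nbrs g i \ C).card : ℝ) + C.card = (nbrs g i).card := by
    have h8 : (nbrs g i \ C).card + C.card = (nbrs g i).card := by
      have := Finset.card_sdiff_of_subset hsub
      have := Finset.card_le_card hsub
      omega
    exact_mod_cast h8
  have hub : (C.card : ℝ) ≤ γ * (1 + ((nbrs g i).card : ℝ) - C.card) := by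
    have h7 : (1 : ℝ) + ((nbrs g i \ C).card : ℝ) = 1 + ((nbrs g i).card : ℝ) - C.card := by
      linarith
    rwa [h7] at hS1C
  have hγ1 : (0:ℝ) < 1 + γ := by linarith
  have hpart3 : γ * ((nbrs g i).card : ℝ) / (1 + γ) < (C.card : ℝ) := by
    rw [div_lt_iff₀ hγ1]
    nlinarith [hwin2]
  have hupper : (C.card : ℝ) - 1 < γ * ((nbrs g i).card : ℝ) / (1 + γ) := by
    rw [lt_div_iff₀ hγ1]
    nlinarith [hub]
  refine ⟨hsub, ?_, hpart3, ?_⟩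
  · have hA : ⌈γ * ((nbrs g i).card : ℝ) / (1 + γ)⌉ ≤ (C.card : ℤ) :=
      Int.ceil_le.mpr (by push_cast; linarith)
    have hB : ((C.card : ℤ) - 1) < ⌈γ * ((nbrs g i).card : ℝ) / (1 + γ)⌉ :=
      Int.lt_ceil.mpr (by push_cast; linarith)
    omega
  · intro C' h1 h2
    have hBcl : g.IsClique ↑(C' ∩ nbrs g i) :=
      h1.subset (Finset.coe_subset.mpr (Finset.inter_subset_left))
    have hiB : i ∉ C' ∩ nbrs g i := fun h => h2 (Finset.mem_inter.mp h).1
    have hB := notVul_le (hS1 i) hBcl hiB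
    have hBsub : C' ∩ nbrs g i ⊆ nbrs g i := Finset.inter_subset_right
    have hBc : ((nbrs g i \ (C' ∩ nbrs g i)).card : ℝ) + (C' ∩ nbrs g i).card
        = (nbrs g i).card := by
      have h8 : (nbrs g i \ (C' ∩ nbrs g i)).card + (C' ∩ nbrs g i).card
          = (nbrs g i).card := by
        have := Finset.card_sdiff_of_subset hBsub
        have := Finset.card_le_card hBsub
        omega
      exact_mod_cast h8
    have h9 : ((C' ∩ nbrs g i).card : ℝ) - 1 < γ * ((nbrs g i).card : ℝ) / (1 + γ) := by
      rw [lt_div_iff₀ hγ1]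
      nlinarith [hB]
    have h10 : ((C' ∩ nbrs g i).card : ℤ) - 1 < ⌈γ * ((nbrs g i).card : ℝ) / (1 + γ)⌉ := by
      apply Int.lt_ceil.mpr
      push_cast
      linarith
    linarith
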